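/- Let r ≥ 2 be fixed, let β > r−2 be a real number, and let F be a family of connected r-uniform hypergraphs. If for every n the edge set of the complete r-partite r-uniform hypergraph K_{n,…,n}^{(r)} (with n vertices in each part) can be colored with O(n^β) colors so that no color class contains a member of F, then for every n the edge set of the complete r-uniform hypergraph K_n^{(r)} can be colored with O(n^β) colors so that no color class contains a member of F. -/

import Mathlib

/-- The set of vertices covered by some edge of a hypergraph, given by its edge set. -/
def hSupp {V : Type*} (E : Set (Finset V)) : Set V := {v | ∃ e ∈ E, v ∈ e}

/-- `HContains F H` : the hypergraph with edge set `H` contains a copy of the hypergraph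
with edge set `F` as a subhypergraph, i.e. there is a map of vertices, injective on the
support of `F`, sending every edge of `F` to an edge of `H`. -/
def HContains {W V : Type*} [DecidableEq V] (F : Set (Finset W)) (H : Set (Finset V)) : Prop :=
  ∃ f : W → V, Set.InjOn f (hSupp F) ∧ ∀ e ∈ F, e.image f ∈ H

/-- A hypergraph (given by its edge set) is connected: any two vertices of its support are
joined by a chain of overlapping hyperedges. -/
def HConnected {V : Type*} (E : Set (Finset V)) : Prop :=
  ∀ u ∈ hSupp E, ∀ v ∈ hSupp E,
    Relation.ReflTransGen (fun x y => ∃ e ∈ E, x ∈ e ∧ y ∈ e) u v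

/-- The edge set of the complete `r`-partite `r`-uniform hypergraph whose parts are
`{i} × Fin n` for `i : Fin r`: the edges are exactly the transversals of the parts. -/
def partiteEdges (r n : ℕ) : Set (Finset (Fin r × Fin n)) :=
  {e | ∃ x : Fin r → Fin n, e = Finset.univ.image fun i => (i, x i)}

namespace S0

lemma exists_div_eq (u v : ℕ) : ∃ s, u / 2^s = v / 2^s := by
  refine ⟨u + v, ?_⟩
  have hu : u < 2^(u+v) := lt_of_lt_of_le (Nat.lt_two_pow_self (n := u)) (Nat.pow_le_pow_right (by norm_num) (Nat.le_add_right _ _))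
  have hv : v < 2^(u+v) := lt_of_lt_of_le (Nat.lt_two_pow_self (n := v)) (Nat.pow_le_pow_right (by norm_num) (Nat.le_add_left _ _))
  rw [Nat.div_eq_of_lt hu, Nat.div_eq_of_lt hv]

/-- one plus the highest differing bit position (0 if equal) -/
def dd (u v : ℕ) : ℕ := Nat.find (exists_div_eq u v)

lemma dd_spec (u v : ℕ) : u / 2^(dd u v) = v / 2^(dd u v) := Nat.find_spec (exists_div_eq u v)

lemma dd_min {u v s : ℕ} (h : s < dd u v) : u / 2^s ≠ v / 2^s := Nat.find_min (exists_div_eq u v) h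

lemma dd_le {u v s : ℕ} (h : u / 2^s = v / 2^s) : dd u v ≤ s := Nat.find_le h

lemma div_eq_of_dd_le {u v s : ℕ} (h : dd u v ≤ s) : u / 2^s = v / 2^s := by
  have h2 : s = dd u v + (s - dd u v) := (Nat.add_sub_cancel' h).symm
  rw [h2, pow_add, ← Nat.div_div_eq_div_mul, ← Nat.div_div_eq_div_mul, dd_spec]

lemma dd_pos {u v : ℕ} (h : u ≠ v) : 0 < dd u v := by
  rcases Nat.eq_zero_or_pos (dd u v) with h0 | h0
  · exfalso; have := dd_spec u v; rw [h0] at this; simp at this; exact h this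
  · exact h0

lemma dd_lt_div_lt {u v s : ℕ} (huv : u < v) (hs : s < dd u v) : u / 2^s < v / 2^s :=
  lt_of_le_of_ne (Nat.div_le_div_right huv.le) (dd_min hs)

lemma dd_le_of_lt_pow {u v L : ℕ} (hu : u < 2^L) (hv : v < 2^L) : dd u v ≤ L :=
  dd_le (by rw [Nat.div_eq_of_lt hu, Nat.div_eq_of_lt hv])

/-- at the top differing bit: v's block is u's block + 1, with bits 0 / 1 -/
lemma dd_succ_block {u v : ℕ} (huv : u < v) :
    v / 2^(dd u v - 1) = u / 2^(dd u v - 1) + 1 ∧ (u / 2^(dd u v - 1)) % 2 = 0 ∧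
      (v / 2^(dd u v - 1)) % 2 = 1 := by
  have hpos : 0 < dd u v := dd_pos huv.ne
  set p := dd u v - 1 with hp
  have hlt : u / 2^p < v / 2^p := dd_lt_div_lt huv (by omega)
  have heq : u / 2^p / 2 = v / 2^p / 2 := by
    have : dd u v ≤ p + 1 := by omega
    have h2 := div_eq_of_dd_le (u := u) (v := v) (s := p+1) this
    rwa [pow_succ, ← Nat.div_div_eq_div_mul, ← Nat.div_div_eq_div_mul] at h2
  omega

lemma dd_three {a b c : ℕ} (hab : a < b) (hbc : b < c) :
    dd a c = max (dd a b) (dd b c) := by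
  set m := max (dd a b) (dd b c) with hm
  have h1 : a / 2^m = c / 2^m := by
    have h2 : a / 2^m = b / 2^m := div_eq_of_dd_le (le_max_left _ _)
    have h3 : b / 2^m = c / 2^m := div_eq_of_dd_le (le_max_right _ _)
    omega
  refine le_antisymm (dd_le h1) ?_
  by_contra h
  push_neg at h
  have hne : a / 2^(dd a c) < c / 2^(dd a c) := by
    rcases max_cases (dd a b) (dd b c) with ⟨hmx, hge⟩ | ⟨hmx, hge⟩
    · have h4 : a / 2^(dd a c) < b / 2^(dd a c) := dd_lt_div_lt hab (by omega)
      have h5 : b / 2^(dd a c) ≤ c / 2^(dd a c) := Nat.div_le_div_right hbc.le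
      omega
    · have h4 : a / 2^(dd a c) ≤ b / 2^(dd a c) := Nat.div_le_div_right hab.le
      have h5 : b / 2^(dd a c) < c / 2^(dd a c) := dd_lt_div_lt hbc (by omega)
      omega
  exact hne.ne (dd_spec a c)


/-- highest differing bit of the `g`-th gap -/
noncomputable def pg (V : ℕ → ℕ) (g : ℕ) : ℕ := dd (V g) (V (g+1)) - 1

/-- minimum over the gaps -/
noncomputable def tvv (V : ℕ → ℕ) (m : ℕ) : ℕ :=
  ((Finset.range (m+1)).image (pg V)).min' (by
    apply Finset.Nonempty.image; exact Finset.nonempty_range_iff.mpr (Nat.succ_ne_zero m))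

lemma exists_istar (V : ℕ → ℕ) (m : ℕ) : ∃ g, g ≤ m ∧ pg V g = tvv V m := by
  have := Finset.min'_mem ((Finset.range (m+1)).image (pg V)) (by
    apply Finset.Nonempty.image; exact Finset.nonempty_range_iff.mpr (Nat.succ_ne_zero m))
  rw [Finset.mem_image] at this
  obtain ⟨g, hg, hpg⟩ := this
  exact ⟨g, by have := Finset.mem_range.mp hg; omega, hpg⟩

noncomputable def istar (V : ℕ → ℕ) (m : ℕ) : ℕ := Nat.find (exists_istar V m)

lemma istar_le (V : ℕ → ℕ) (m : ℕ) : istar V m ≤ m := (Nat.find_spec (exists_istar V m)).1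

lemma pg_istar (V : ℕ → ℕ) (m : ℕ) : pg V (istar V m) = tvv V m :=
  (Nat.find_spec (exists_istar V m)).2

lemma tv_le_pg (V : ℕ → ℕ) (m : ℕ) {g : ℕ} (hg : g ≤ m) : tvv V m ≤ pg V g :=
  Finset.min'_le _ _ (Finset.mem_image_of_mem _ (Finset.mem_range.mpr (by omega)))

section Sorted

variable {m L : ℕ} {V : ℕ → ℕ}
variable (hsort : ∀ i j, i < j → j ≤ m+1 → V i < V j)
variable (hbnd : ∀ i, i ≤ m+1 → V i < 2^L)

include hsort in
lemma chain_dd : ∀ k i, i < k → k ≤ m+1 →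
    ∃ g, i ≤ g ∧ g < k ∧ dd (V i) (V k) = dd (V g) (V (g+1)) := by
  intro k
  induction k with
  | zero => omega
  | succ k ih =>
    intro i hik hk
    rcases Nat.lt_or_ge i k with h | h
    · have h3 := dd_three (hsort i k h (by omega)) (hsort k (k+1) (by omega) hk)
      rcases max_cases (dd (V i) (V k)) (dd (V k) (V (k+1))) with ⟨hmx, _⟩ | ⟨hmx, _⟩
      · obtain ⟨g, hg1, hg2, hg3⟩ := ih i h (by omega)
        exact ⟨g, hg1, by omega, by rw [h3, hmx, hg3]⟩
      · exact ⟨k, h.le, by omega, by rw [h3, hmx]⟩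
    · have hik2 : i = k := by omega
      subst hik2
      exact ⟨i, le_refl _, by omega, rfl⟩

include hsort hbnd in
lemma dd_gap_bounds {g : ℕ} (hg : g ≤ m) :
    1 ≤ dd (V g) (V (g+1)) ∧ dd (V g) (V (g+1)) ≤ L := by
  constructor
  · exact dd_pos (hsort g (g+1) (by omega) (by omega)).ne
  · exact dd_le_of_lt_pow (hbnd g (by omega)) (hbnd (g+1) (by omega))

include hsort hbnd in
lemma pg_le (hL : 1 ≤ L) {g : ℕ} (hg : g ≤ m) : pg V g ≤ L - 1 := by
  have := dd_gap_bounds hsort hbnd hg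
  unfold pg; omega

include hsort in
/-- bit discrimination: for every i < k there is a gap position separating them -/
lemma sigma_discr {i k : ℕ} (hik : i < k) (hk : k ≤ m+1) :
    ∃ g, i ≤ g ∧ g < k ∧ (V i / 2^(pg V g)) % 2 = 0 ∧ (V k / 2^(pg V g)) % 2 = 1 := by
  obtain ⟨g, hg1, hg2, hg3⟩ := chain_dd hsort k i hik hk
  have hb := dd_succ_block (hsort i k hik hk)
  rw [hg3] at hb
  exact ⟨g, hg1, hg2, by unfold pg; exact hb.2.1, by unfold pg; exact hb.2.2⟩

end Sorted


def bv (V : ℕ → ℕ) (t i : ℕ) : ℕ := V i / 2^t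
def xg (V : ℕ → ℕ) (t g : ℕ) : ℕ := bv V t (g+1) - bv V t g
noncomputable def enc (V : ℕ → ℕ) (t g : ℕ) : ℕ := 2^(pg V g - t + 1) + xg V t g

lemma sub_lt_of_div_eq {x y K : ℕ} (hK : 0 < K) (hxy : x ≤ y) (h : x / K = y / K) :
    y - x < K := by
  have h1 := Nat.div_add_mod x K
  have h2 := Nat.div_add_mod y K
  have h3 : K * (y / K) = K * (x / K) := by rw [h]
  have h4 : x % K < K := Nat.mod_lt _ hK
  have h5 : y % K < K := Nat.mod_lt _ hK
  omega

section Sorted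

variable {m L : ℕ} {V : ℕ → ℕ}
variable (hsort : ∀ i j, i < j → j ≤ m+1 → V i < V j)
variable (hbnd : ∀ i, i ≤ m+1 → V i < 2^L)

include hsort in
lemma bv_mono {t g : ℕ} (hg : g ≤ m) : bv V t g ≤ bv V t (g+1) :=
  Nat.div_le_div_right (hsort g (g+1) (by omega) (by omega)).le

include hsort in
lemma bv_step {t g : ℕ} (hg : g ≤ m) : bv V t (g+1) = bv V t g + xg V t g := by
  have := bv_mono hsort (t := t) hg
  unfold xg; omega

include hsort in
lemma x_pos {g : ℕ} (hg : g ≤ m) : 1 ≤ xg V (tvv V m) g := by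
  have hlt : bv V (tvv V m) g < bv V (tvv V m) (g+1) := by
    apply dd_lt_div_lt (hsort g (g+1) (by omega) (by omega))
    have h1 := tv_le_pg V m hg
    have h2 := dd_pos (hsort g (g+1) (by omega) (by omega)).ne
    unfold pg at h1; omega
  unfold xg; omega

include hsort in
lemma x_lt {g : ℕ} (hg : g ≤ m) :
    xg V (tvv V m) g < 2^(pg V g - tvv V m + 1) := by
  set t := tvv V m with ht
  set p := pg V g with hp
  have htp : t ≤ p := tv_le_pg V m hg
  have hd1 : 1 ≤ dd (V g) (V (g+1)) := dd_pos (hsort g (g+1) (by omega) (by omega)).ne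
  have hdp : dd (V g) (V (g+1)) = p + 1 := by rw [hp]; unfold pg; omega
  have heq : V g / 2^(p+1) = V (g+1) / 2^(p+1) := div_eq_of_dd_le (by omega)
  have heq2 : bv V t g / 2^(p-t+1) = bv V t (g+1) / 2^(p-t+1) := by
    unfold bv
    rw [Nat.div_div_eq_div_mul, Nat.div_div_eq_div_mul, ← pow_add]
    have : t + (p - t + 1) = p + 1 := by omega
    rw [this]; exact heq
  have := sub_lt_of_div_eq (Nat.pow_pos (by norm_num)) (bv_mono hsort hg) heq2
  unfold xg; omega

include hsort in
lemma x_eq_one_of_min {g : ℕ} (hg : g ≤ m) (hmin : pg V g = tvv V m) :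
    xg V (tvv V m) g = 1 := by
  have hb := dd_succ_block (hsort g (g+1) (by omega) (by omega))
  have hd1 : 1 ≤ dd (V g) (V (g+1)) := dd_pos (hsort g (g+1) (by omega) (by omega)).ne
  have hdp : dd (V g) (V (g+1)) - 1 = tvv V m := by rw [← hmin]; rfl
  rw [hdp] at hb
  unfold xg bv; omega

include hsort hbnd in
lemma enc_lt {g : ℕ} (hg : g ≤ m) :
    enc V (tvv V m) g < 2^(L + 1 - tvv V m) := by
  have hx := x_lt hsort (m := m) hg
  have hb := dd_gap_bounds hsort hbnd hg
  have htp : tvv V m ≤ pg V g := tv_le_pg V m hg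
  have hpL : pg V g + 1 ≤ L := by unfold pg; omega
  have h1 : enc V (tvv V m) g < 2^(pg V g - tvv V m + 2) := by
    unfold enc
    have : (2:ℕ)^(pg V g - tvv V m + 2) = 2^(pg V g - tvv V m + 1) + 2^(pg V g - tvv V m + 1) := by
      rw [pow_succ]; ring
    omega
  refine lt_of_lt_of_le h1 (Nat.pow_le_pow_right (by norm_num) (by omega))

end Sorted

lemma enc_inj {t p1 p2 x1 x2 : ℕ} (h1 : t ≤ p1) (h2 : t ≤ p2)
    (hx1 : 1 ≤ x1) (hx1' : x1 < 2^(p1 - t + 1)) (hx2 : 1 ≤ x2) (hx2' : x2 < 2^(p2 - t + 1))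
    (heq : 2^(p1 - t + 1) + x1 = 2^(p2 - t + 1) + x2) : p1 = p2 ∧ x1 = x2 := by
  rcases lt_trichotomy p1 p2 with h | h | h
  · exfalso
    have : p1 - t + 1 + 1 ≤ p2 - t + 1 := by omega
    have h3 : (2:ℕ)^(p1 - t + 1 + 1) ≤ 2^(p2 - t + 1) := Nat.pow_le_pow_right (by norm_num) this
    rw [pow_succ] at h3
    omega
  · constructor
    · exact h
    · rw [h] at heq; omega
  · exfalso
    have : p2 - t + 1 + 1 ≤ p1 - t + 1 := by omega
    have h3 : (2:ℕ)^(p2 - t + 1 + 1) ≤ 2^(p1 - t + 1) := Nat.pow_le_pow_right (by norm_num) this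
    rw [pow_succ] at h3
    omega


lemma enc_def (V : ℕ → ℕ) (t g : ℕ) : enc V t g = 2^(pg V g - t + 1) + xg V t g := rfl

section Sorted2
variable {m L : ℕ} {V : ℕ → ℕ}
variable (hsort : ∀ i j, i < j → j ≤ m+1 → V i < V j)
variable (hbnd : ∀ i, i ≤ m+1 → V i < 2^L)

include hsort hbnd in
lemma pg_bounds {g : ℕ} (hg : g ≤ m) : 1 ≤ pg V g + 1 ∧ pg V g + 1 ≤ L := by
  have := dd_gap_bounds hsort hbnd hg
  unfold pg; omega

include hsort in
lemma bv_step_div {t g : ℕ} (hg : g ≤ m) : V (g+1) / 2^t = V g / 2^t + xg V t g :=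
  bv_step hsort hg

end Sorted2

variable {n m : ℕ}

/-- the sorted list of values of an edge -/
def vl (e : Finset (Fin n)) : ℕ → ℕ := fun i => ((e.image Fin.val).sort (· ≤ ·)).getD i 0

lemma vl_len (e : Finset (Fin n)) (he : e.card = m+2) :
    ((e.image Fin.val).sort (· ≤ ·)).length = m+2 := by
  rw [Finset.length_sort, Finset.card_image_of_injective _ Fin.val_injective, he]

lemma vl_sort (e : Finset (Fin n)) (he : e.card = m+2) :
    ∀ i j, i < j → j ≤ m+1 → vl e i < vl e j := by
  intro i j hij hj
  have hlen := vl_len e he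
  have hi' : i < ((e.image Fin.val).sort (· ≤ ·)).length := by omega
  have hj' : j < ((e.image Fin.val).sort (· ≤ ·)).length := by omega
  have hs : List.Pairwise (· < ·) ((e.image Fin.val).sort (· ≤ ·)) := (Finset.sortedLT_sort _).pairwise
  have := List.pairwise_iff_get.mp hs ⟨i, hi'⟩ ⟨j, hj'⟩ (by exact hij)
  unfold vl
  rwa [List.getD_eq_get _ _ ⟨i, hi'⟩, List.getD_eq_get _ _ ⟨j, hj'⟩]

lemma vl_mem (e : Finset (Fin n)) (he : e.card = m+2) {i : ℕ} (hi : i ≤ m+1) :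
    ∃ w ∈ e, (w : ℕ) = vl e i := by
  have hlen := vl_len e he
  have hi' : i < ((e.image Fin.val).sort (· ≤ ·)).length := by omega
  have hmem : vl e i ∈ (e.image Fin.val).sort (· ≤ ·) := by
    unfold vl; rw [List.getD_eq_get _ _ ⟨i, hi'⟩]; exact List.get_mem _ _
  rw [Finset.mem_sort, Finset.mem_image] at hmem
  obtain ⟨w, hw, hweq⟩ := hmem
  exact ⟨w, hw, hweq⟩

lemma mem_vl (e : Finset (Fin n)) (he : e.card = m+2) {w : Fin n} (hw : w ∈ e) :
    ∃ i, i ≤ m+1 ∧ vl e i = (w : ℕ) := by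
  have hlen := vl_len e he
  have hmem : (w : ℕ) ∈ (e.image Fin.val).sort (· ≤ ·) := by
    rw [Finset.mem_sort, Finset.mem_image]; exact ⟨w, hw, rfl⟩
  rw [List.mem_iff_get] at hmem
  obtain ⟨⟨i, hi⟩, hieq⟩ := hmem
  refine ⟨i, by omega, ?_⟩
  unfold vl; rw [List.getD_eq_get _ _ ⟨i, hi⟩]; exact hieq

lemma vl_lt (e : Finset (Fin n)) (he : e.card = m+2) {i : ℕ} (hi : i ≤ m+1) :
    vl e i < n := by
  obtain ⟨w, _, hweq⟩ := vl_mem e he hi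
  rw [← hweq]; exact w.2


variable (m L : ℕ) (kf : ℕ → ℕ)

/-- The color type -/
def CT : Type :=
  Σ t : Fin (L+1), Fin (m+1) × (Fin m → Fin (2^(L+1-(t:ℕ)))) ×
    (Fin (m+2) → Fin (m+1) → Bool) × Fin (kf (2^(t:ℕ)))

noncomputable instance : Fintype (CT m L kf) := by unfold CT; infer_instance

def Pt (c : CT m L kf) : ℕ := c.1
def Pi' (c : CT m L kf) : ℕ := c.2.1
def Py (c : CT m L kf) (g : Fin m) : ℕ := (c.2.2.1 g : ℕ)
def Pσ (c : CT m L kf) : Fin (m+2) → Fin (m+1) → Bool := c.2.2.2.1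
def Pj (c : CT m L kf) : ℕ := (c.2.2.2.2 : ℕ)

lemma Pj_lt (c : CT m L kf) : Pj m L kf c < kf (2^(Pt m L kf c)) := (c.2.2.2.2).2

variable {n : ℕ}

noncomputable def pedgeF (V : ℕ → ℕ) (t : ℕ) : Finset (Fin (m+2) × Fin (2^t)) :=
  Finset.univ.image (fun i => (i, ⟨V i % 2^t, Nat.mod_lt _ (Nat.pow_pos (by norm_num))⟩))

lemma pedgeF_mem (V : ℕ → ℕ) (t : ℕ) : pedgeF m V t ∈ partiteEdges (m+2) (2^t) :=
  ⟨_, rfl⟩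

section MC

variable (hn : n ≤ 2^L) (hL : 1 ≤ L)
  (colfun : ∀ M, {e : Finset (Fin (m+2) × Fin M) // e ∈ partiteEdges (m+2) M} → Fin (kf M))

noncomputable def mycolor (e : {e : Finset (Fin n) // e.card = m+2}) : CT m L kf :=
  ⟨⟨tvv (vl e.1) m, by
      have hb := pg_bounds (vl_sort e.1 e.2) (fun i hi => lt_of_lt_of_le (vl_lt e.1 e.2 hi) hn) (Nat.zero_le m)
      have := tv_le_pg (vl e.1) m (Nat.zero_le m)
      omega⟩,
   ⟨istar (vl e.1) m, by have := istar_le (vl e.1) m; omega⟩,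
   fun g => ⟨enc (vl e.1) (tvv (vl e.1) m)
       ((⟨istar (vl e.1) m, by have := istar_le (vl e.1) m; omega⟩ : Fin (m+1)).succAbove g),
     by
       exact enc_lt (vl_sort e.1 e.2) (fun i hi => lt_of_lt_of_le (vl_lt e.1 e.2 hi) hn)
         (by have := ((⟨istar (vl e.1) m, by have := istar_le (vl e.1) m; omega⟩ : Fin (m+1)).succAbove g).2; omega)⟩,
   fun i gg => decide ((vl e.1 (i : ℕ) / 2^(pg (vl e.1) (gg : ℕ))) % 2 = 1),
   colfun (2^(tvv (vl e.1) m)) ⟨pedgeF m (vl e.1) (tvv (vl e.1) m), pedgeF_mem m _ _⟩⟩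

lemma Pt_mycolor (e) : Pt m L kf (mycolor m L kf hn colfun e) = tvv (vl e.1) m := rfl
lemma Pi_mycolor (e) : Pi' m L kf (mycolor m L kf hn colfun e) = istar (vl e.1) m := rfl
lemma Pσ_mycolor (e) (i : Fin (m+2)) (g : Fin (m+1)) :
    Pσ m L kf (mycolor m L kf hn colfun e) i g
      = decide ((vl e.1 (i : ℕ) / 2^(pg (vl e.1) (g : ℕ))) % 2 = 1) := rfl
lemma Py_mycolor (e) (g : Fin m) :
    Py m L kf (mycolor m L kf hn colfun e) g
      = enc (vl e.1) (tvv (vl e.1) m)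
          ((⟨istar (vl e.1) m, by have := istar_le (vl e.1) m; omega⟩ : Fin (m+1)).succAbove g) := rfl
lemma Pj_mycolor (e) :
    Pj m L kf (mycolor m L kf hn colfun e)
      = (colfun (2^(tvv (vl e.1) m)) ⟨pedgeF m (vl e.1) (tvv (vl e.1) m), pedgeF_mem m _ _⟩ : ℕ) := rfl

/-- coherence: two edges with the same color have the same gap data -/
lemma coherence (e1 e2 : {e : Finset (Fin n) // e.card = m+2})
    (h : mycolor m L kf hn colfun e1 = mycolor m L kf hn colfun e2) :
    tvv (vl e1.1) m = tvv (vl e2.1) m ∧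
    (∀ g, g ≤ m → pg (vl e1.1) g = pg (vl e2.1) g ∧
      xg (vl e1.1) (tvv (vl e1.1) m) g = xg (vl e2.1) (tvv (vl e2.1) m) g) := by
  have hs1 := vl_sort e1.1 e1.2
  have hs2 := vl_sort e2.1 e2.2
  have hT : tvv (vl e1.1) m = tvv (vl e2.1) m := by
    have := congrArg (Pt m L kf) h; rwa [Pt_mycolor, Pt_mycolor] at this
  refine ⟨hT, fun g hg => ?_⟩
  have hI : istar (vl e1.1) m = istar (vl e2.1) m := by
    have := congrArg (Pi' m L kf) h; rwa [Pi_mycolor, Pi_mycolor] at this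
  set i₀ : Fin (m+1) := ⟨istar (vl e1.1) m, by have := istar_le (vl e1.1) m; omega⟩ with hi₀
  by_cases hgi : g = istar (vl e1.1) m
  · have h1 : pg (vl e1.1) g = tvv (vl e1.1) m := by rw [hgi]; exact pg_istar _ _
    have h2 : pg (vl e2.1) g = tvv (vl e2.1) m := by rw [hgi, hI]; exact pg_istar _ _
    refine ⟨by rw [h1, h2, hT], ?_⟩
    rw [x_eq_one_of_min hs1 hg h1, x_eq_one_of_min hs2 hg h2]
  · have hgfin : (⟨g, by omega⟩ : Fin (m+1)) ≠ i₀ := by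
      simp only [hi₀, ne_eq, Fin.mk.injEq]; exact hgi
    obtain ⟨z, hz⟩ := Fin.exists_succAbove_eq hgfin
    have hY : Py m L kf (mycolor m L kf hn colfun e1) z
        = Py m L kf (mycolor m L kf hn colfun e2) z := by rw [h]
    rw [Py_mycolor, Py_mycolor] at hY
    have hmk : (⟨istar (vl e2.1) m, by have := istar_le (vl e2.1) m; omega⟩ : Fin (m+1)) = i₀ := by
      simp only [hi₀, Fin.mk.injEq]; exact hI.symm
    rw [hmk] at hY
    rw [hz] at hY
    have hgv : ((⟨g, by omega⟩ : Fin (m+1)) : ℕ) = g := rfl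
    rw [hgv] at hY
    rw [enc_def, enc_def] at hY
    have hb1 := x_pos hs1 (m := m) hg
    have hb1' := x_lt hs1 (m := m) hg
    have hb2 := x_pos hs2 (m := m) hg
    have hb2' := x_lt hs2 (m := m) hg
    have ht1 := tv_le_pg (vl e1.1) m hg
    have ht2 := tv_le_pg (vl e2.1) m hg
    rw [← hT] at hb2 hb2' ht2 hY
    have := enc_inj ht1 ht2 hb1 hb1' hb2 hb2' hY
    exact ⟨this.1, by rw [← hT]; exact this.2⟩


lemma colfun_bridge (V : ℕ → ℕ) (t1 t2 : ℕ) (h : t1 = t2) :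
    (colfun (2^t1) ⟨pedgeF m V t1, pedgeF_mem m V t1⟩ : ℕ)
      = (colfun (2^t2) ⟨pedgeF m V t2, pedgeF_mem m V t2⟩ : ℕ) := by subst h; rfl

set_option maxHeartbeats 1000000 in
lemma avoidance (E : Set (Finset ℕ)) (hconnE : HConnected E)
    (c : CT m L kf) (φ : ℕ → Fin n) (hinj : Set.InjOn φ (hSupp E))
    (hedge : ∀ a ∈ E, ∃ hca : (a.image φ).card = m+2,
      mycolor m L kf hn colfun ⟨a.image φ, hca⟩ = c) :
    HContains E {e : Finset (Fin (m+2) × Fin (2^(Pt m L kf c))) |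
      ∃ he : e ∈ partiteEdges (m+2) (2^(Pt m L kf c)),
        colfun (2^(Pt m L kf c)) ⟨e, he⟩ = ⟨Pj m L kf c, Pj_lt m L kf c⟩} := by
  classical
  rcases Set.eq_empty_or_nonempty E with hEe | ⟨a₀, ha₀⟩
  · subst hEe
    refine ⟨fun _ => (⟨0, by omega⟩, ⟨0, Nat.pow_pos (by norm_num)⟩), ?_, ?_⟩
    · intro u hu; exact absurd hu (by simp [hSupp])
    · intro a ha; exact absurd ha (Set.notMem_empty a)
  · set t := Pt m L kf c with htdef
    have hMpos : 0 < 2^t := Nat.pow_pos (by norm_num)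
    have hca : ∀ a ∈ E, (a.image φ).card = m+2 := fun a ha => (hedge a ha).choose
    have hcol : ∀ a (ha : a ∈ E), mycolor m L kf hn colfun ⟨a.image φ, hca a ha⟩ = c :=
      fun a ha => (hedge a ha).choose_spec
    have hsorts : ∀ a (ha : a ∈ E), ∀ i j, i < j → j ≤ m+1 → vl (a.image φ) i < vl (a.image φ) j :=
      fun a ha => vl_sort _ (hca a ha)
    -- the class data
    set V₀ := vl (a₀.image φ) with hV₀
    have ht0 : tvv V₀ m = t := by
      rw [htdef, ← hcol a₀ ha₀, Pt_mycolor]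
    set PP : ℕ → ℕ := pg V₀ with hPP
    set XX : ℕ → ℕ := xg V₀ t with hXX
    set PS : ℕ → ℕ := fun q => ∑ g ∈ Finset.range q, XX g with hPS
    set σm : Fin (m+2) → Fin (m+1) → Bool := Pσ m L kf c with hσm
    set σrow : ℕ → Fin (m+1) → Bool :=
      fun w => fun g => decide ((w / 2^(PP (g : ℕ))) % 2 = 1) with hσrow
    -- coherence with the base edge
    have hcoh : ∀ a (ha : a ∈ E), tvv (vl (a.image φ)) m = t ∧
        (∀ g, g ≤ m → pg (vl (a.image φ)) g = PP g ∧
          xg (vl (a.image φ)) t g = XX g) := by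
      intro a ha
      have h := coherence m L kf hn colfun ⟨a.image φ, hca a ha⟩ ⟨a₀.image φ, hca a₀ ha₀⟩
        (by rw [hcol a ha, hcol a₀ ha₀])
      have hta : tvv (vl (a.image φ)) m = t := by rw [h.1]; exact ht0
      refine ⟨hta, fun g hg => ⟨(h.2 g hg).1, ?_⟩⟩
      have := (h.2 g hg).2
      rw [hta, ht0] at this
      exact this
    -- sigma rows
    have hσ : ∀ a (ha : a ∈ E), ∀ i : Fin (m+2), σm i = σrow (vl (a.image φ) (i : ℕ)) := by
      intro a ha i
      funext g
      rw [hσm, ← hcol a ha, Pσ_mycolor]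
      have := ((hcoh a ha).2 (g : ℕ) (by omega)).1
      rw [this]
    -- sigma injectivity
    have hσkey : ∀ a (ha : a ∈ E), ∀ i k : Fin (m+2), (i : ℕ) < (k : ℕ) → σm i ≠ σm k := by
      intro a ha i k hik heq
      obtain ⟨g, hg1, hg2, hb0, hb1⟩ := sigma_discr (hsorts a ha) hik (by omega)
      have hgm : g ≤ m := by omega
      have hPPg : pg (vl (a.image φ)) g = PP g := ((hcoh a ha).2 g hgm).1
      have h1 : σm i ⟨g, by omega⟩ = false := by
        rw [hσ a ha i, hσrow]
        simp only [← hPPg]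
        simp [hb0]
      have h2 : σm k ⟨g, by omega⟩ = true := by
        rw [hσ a ha k, hσrow]
        simp only [← hPPg]
        simp [hb1]
      rw [heq] at h1
      rw [h1] at h2
      exact Bool.false_ne_true h2
    have hσinj : Function.Injective σm := by
      intro i k heq
      rcases lt_trichotomy (i : ℕ) (k : ℕ) with h | h | h
      · exact absurd heq (hσkey a₀ ha₀ i k h)
      · exact Fin.ext h
      · exact absurd heq.symm (hσkey a₀ ha₀ k i h)
    -- the rank function
    set rk : ℕ → Fin (m+2) := fun w =>
      if h : ∃ i : Fin (m+2), σm i = σrow w then h.choose else ⟨0, by omega⟩ with hrk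
    have hrank : ∀ a (ha : a ∈ E), ∀ i : Fin (m+2), rk (vl (a.image φ) (i : ℕ)) = i := by
      intro a ha i
      have hex : ∃ i' : Fin (m+2), σm i' = σrow (vl (a.image φ) (i : ℕ)) := ⟨i, hσ a ha i⟩
      simp only [hrk]
      rw [dif_pos hex]
      exact hσinj (hex.choose_spec.trans (hσ a ha i).symm)
    -- blocks
    have hblock : ∀ a (ha : a ∈ E), ∀ q, q ≤ m+1 →
        vl (a.image φ) q / 2^t = vl (a.image φ) 0 / 2^t + PS q := by
      intro a ha q
      induction q with
      | zero => intro _; simp [hPS]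
      | succ q ih =>
        intro hq
        have hqm : q ≤ m := by omega
        have hstep := bv_step_div (hsorts a ha) (t := t) hqm
        have hx : xg (vl (a.image φ)) t q = XX q := ((hcoh a ha).2 q hqm).2
        have hsum : PS (q+1) = PS q + XX q := by
          simp [hPS, Finset.sum_range_succ]
        have ih' := ih (by omega)
        rw [hstep, hx, ih', hsum]
        omega
    -- membership indices
    have hidx : ∀ a (ha : a ∈ E), ∀ w ∈ a, ∃ i : Fin (m+2), vl (a.image φ) (i : ℕ) = (φ w : ℕ) := by
      intro a ha w hw
      obtain ⟨i, hi, heq⟩ := mem_vl (a.image φ) (hca a ha) (Finset.mem_image_of_mem φ hw)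
      exact ⟨⟨i, by omega⟩, heq⟩
    have hidx' : ∀ a (ha : a ∈ E), ∀ i : Fin (m+2), ∃ w ∈ a, (φ w : ℕ) = vl (a.image φ) (i : ℕ) := by
      intro a ha i
      obtain ⟨w', hw', heq⟩ := vl_mem (a.image φ) (hca a ha) (i := (i : ℕ)) (by omega)
      rw [Finset.mem_image] at hw'
      obtain ⟨w, hw, hww⟩ := hw'
      exact ⟨w, hw, by rw [hww]; exact heq⟩
    -- pairwise invariance within an edge
    have hpair : ∀ a (ha : a ∈ E), ∀ u ∈ a, ∀ v ∈ a,
        (φ u : ℕ) / 2^t + PS (rk (φ v : ℕ) : ℕ) = (φ v : ℕ) / 2^t + PS (rk (φ u : ℕ) : ℕ) := by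
      intro a ha u hu v hv
      obtain ⟨i, hi⟩ := hidx a ha u hu
      obtain ⟨k, hk⟩ := hidx a ha v hv
      have hru : rk (φ u : ℕ) = i := by rw [← hi]; exact hrank a ha i
      have hrv : rk (φ v : ℕ) = k := by rw [← hk]; exact hrank a ha k
      have hbu : (φ u : ℕ) / 2^t = vl (a.image φ) 0 / 2^t + PS (i : ℕ) := by
        rw [← hi]; exact hblock a ha (i : ℕ) (by omega)
      have hbv : (φ v : ℕ) / 2^t = vl (a.image φ) 0 / 2^t + PS (k : ℕ) := by
        rw [← hk]; exact hblock a ha (k : ℕ) (by omega)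
      rw [hru, hrv, hbu, hbv]
      omega
    -- global invariance along connectivity
    have hinv : ∀ u v : ℕ, Relation.ReflTransGen (fun x y => ∃ e ∈ E, x ∈ e ∧ y ∈ e) u v →
        (φ u : ℕ) / 2^t + PS (rk (φ v : ℕ) : ℕ) = (φ v : ℕ) / 2^t + PS (rk (φ u : ℕ) : ℕ) := by
      intro u v hchain
      induction hchain with
      | refl => rfl
      | tail h1 h2 ih =>
        obtain ⟨a, ha, hx, hy⟩ := h2
        have := hpair a ha _ hx _ hy
        omega
    -- the partite map
    refine ⟨fun w => (rk (φ w : ℕ), ⟨(φ w : ℕ) % 2^t, Nat.mod_lt _ hMpos⟩), ?_, ?_⟩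
    · intro u hu v hv heq
      rw [Prod.mk.injEq] at heq
      have h1 : rk (φ u : ℕ) = rk (φ v : ℕ) := heq.1
      have h2 : (φ u : ℕ) % 2^t = (φ v : ℕ) % 2^t := by
        have := heq.2
        rwa [Fin.mk.injEq] at this
      have h3 := hinv u v (hconnE u hu v hv)
      rw [h1] at h3
      have h4 : (φ u : ℕ) / 2^t = (φ v : ℕ) / 2^t := by omega
      have h5 : (φ u : ℕ) = (φ v : ℕ) := by
        have hdu := Nat.div_add_mod (φ u : ℕ) (2^t)
        have hdv := Nat.div_add_mod (φ v : ℕ) (2^t)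
        have h6 : 2^t * ((φ u : ℕ) / 2^t) = 2^t * ((φ v : ℕ) / 2^t) := by rw [h4]
        omega
      exact hinj hu hv (Fin.val_injective h5)
    · intro a ha
      have himg : Finset.image (fun w => ((rk (φ w : ℕ),
            ⟨(φ w : ℕ) % 2^t, Nat.mod_lt _ hMpos⟩) : Fin (m+2) × Fin (2^t))) a
          = pedgeF m (vl (a.image φ)) t := by
        apply Finset.Subset.antisymm
        · intro p hp
          obtain ⟨w, hw, hpw⟩ := Finset.mem_image.mp hp
          obtain ⟨i', hi'⟩ := hidx a ha w hw
          have hr : rk (φ w : ℕ) = i' := by rw [← hi']; exact hrank a ha i'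
          unfold pedgeF
          apply Finset.mem_image.mpr
          refine ⟨i', Finset.mem_univ _, ?_⟩
          have h2 : (⟨(φ w : ℕ) % 2^t, Nat.mod_lt _ hMpos⟩ : Fin (2^t))
              = ⟨vl (a.image φ) (i' : ℕ) % 2^t,
                  Nat.mod_lt _ (Nat.pow_pos (by norm_num))⟩ := by
            apply Fin.ext
            show (φ w : ℕ) % 2^t = vl (a.image φ) (i' : ℕ) % 2^t
            rw [hi']
          rw [← hpw, hr, h2]
        · intro p hp
          unfold pedgeF at hp
          obtain ⟨i, _, hpi⟩ := Finset.mem_image.mp hp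
          obtain ⟨w, hw, hww⟩ := hidx' a ha i
          apply Finset.mem_image.mpr
          refine ⟨w, hw, ?_⟩
          rw [← hpi]
          have hr : rk (φ w : ℕ) = i := by rw [hww]; exact hrank a ha i
          have h2 : (⟨(φ w : ℕ) % 2^t, Nat.mod_lt _ hMpos⟩ : Fin (2^t))
              = ⟨vl (a.image φ) (i : ℕ) % 2^t,
                  Nat.mod_lt _ (Nat.pow_pos (by norm_num))⟩ := by
            apply Fin.ext
            show (φ w : ℕ) % 2^t = vl (a.image φ) (i : ℕ) % 2^t
            rw [hww]
          rw [hr, h2]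
      rw [Set.mem_setOf_eq]
      have hmem : Finset.image (fun w => ((rk (φ w : ℕ),
            ⟨(φ w : ℕ) % 2^t, Nat.mod_lt _ hMpos⟩) : Fin (m+2) × Fin (2^t))) a
          ∈ partiteEdges (m+2) (2^t) := by
        rw [himg]; exact pedgeF_mem m _ _
      refine ⟨hmem, ?_⟩
      have hsub : (⟨Finset.image (fun w => ((rk (φ w : ℕ),
            ⟨(φ w : ℕ) % 2^t, Nat.mod_lt _ hMpos⟩) : Fin (m+2) × Fin (2^t))) a, hmem⟩ :
            {e // e ∈ partiteEdges (m+2) (2^t)})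
          = ⟨pedgeF m (vl (a.image φ)) t, pedgeF_mem m _ _⟩ := Subtype.ext himg
      rw [hsub]
      apply Fin.ext
      have hb := colfun_bridge m kf colfun (vl (a.image φ)) (tvv (vl (a.image φ)) m) t
        ((hcoh a ha).1)
      have hval : (colfun (2^(tvv (vl (a.image φ)) m))
          ⟨pedgeF m (vl (a.image φ)) (tvv (vl (a.image φ)) m), pedgeF_mem m _ _⟩ : ℕ)
          = Pj m L kf c := by
        rw [← Pj_mycolor m L kf hn colfun ⟨a.image φ, hca a ha⟩, hcol a ha]
      show (colfun (2^t) ⟨pedgeF m (vl (a.image φ)) t, pedgeF_mem m _ _⟩ : ℕ) = Pj m L kf c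
      rw [← hb]
      exact hval


end MC

lemma card_CT (m L : ℕ) (kf : ℕ → ℕ) :
    Fintype.card (CT m L kf)
      = ∑ t : Fin (L+1), (m+1) * ((2^(L+1-(t:ℕ)))^m * (2^((m+1)*(m+2)) * kf (2^(t:ℕ)))) := by
  unfold CT
  rw [Fintype.card_sigma]
  congr 1
  funext t
  simp only [Fintype.card_prod, Fintype.card_fun, Fintype.card_fin, Fintype.card_bool]
  ring

lemma key_identity (m L t : ℕ) (β : ℝ) (ht : t ≤ L) :
    ((2:ℝ)^(L+1-t))^m * ((2:ℝ)^t)^β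
      = (2:ℝ)^m * ((2:ℝ)^((m:ℝ) - β))^(L-t) * ((2:ℝ)^L)^β := by
  have h2 : (0:ℝ) ≤ 2 := by norm_num
  have hc1 : ((L+1-t : ℕ) : ℝ) = (L:ℝ) + 1 - t := by
    push_cast [Nat.cast_sub (by omega : t ≤ L + 1)]; ring
  have hc2 : ((L-t : ℕ) : ℝ) = (L:ℝ) - t := by
    push_cast [Nat.cast_sub ht]; ring
  rw [← pow_mul]
  rw [← Real.rpow_natCast (2:ℝ) ((L+1-t)*m), ← Real.rpow_natCast (2:ℝ) t,
    ← Real.rpow_natCast (2:ℝ) m, ← Real.rpow_natCast (2:ℝ) L,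
    ← Real.rpow_natCast ((2:ℝ)^((m:ℝ) - β)) (L-t)]
  rw [← Real.rpow_mul h2, ← Real.rpow_mul h2, ← Real.rpow_mul h2,
    ← Real.rpow_add (by norm_num : (0:ℝ) < 2), ← Real.rpow_add (by norm_num : (0:ℝ) < 2),
    ← Real.rpow_add (by norm_num : (0:ℝ) < 2)]
  congr 1
  push_cast [Nat.cast_sub (by omega : t ≤ L + 1), Nat.cast_sub ht]
  ring

lemma card_CT_le (m L : ℕ) (kf : ℕ → ℕ) (C β : ℝ) (hC : 0 < C) (hβ : (m:ℝ) < β)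
    (hkf : ∀ M : ℕ, (kf M : ℝ) ≤ C * ((M:ℕ):ℝ)^β) :
    (Fintype.card (CT m L kf) : ℝ) ≤
      ((m+1) * 2^((m+1)*(m+2)) * 2^m * C / (1 - (2:ℝ)^((m:ℝ) - β))) * ((2:ℝ)^L)^β := by
  set ρ : ℝ := (2:ℝ)^((m:ℝ) - β) with hρ
  have hρpos : 0 < ρ := Real.rpow_pos_of_pos (by norm_num) _
  have hρlt : ρ < 1 := Real.rpow_lt_one_of_one_lt_of_neg (by norm_num) (by linarith)
  have h1ρ : 0 < 1 - ρ := by linarith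
  set D : ℝ := (m+1) * 2^((m+1)*(m+2)) * 2^m * C with hD
  have hDpos : 0 < D := by
    apply mul_pos (mul_pos (mul_pos _ _) _) hC <;> positivity
  set P : ℝ := ((2:ℝ)^L)^β with hP
  have hPpos : 0 < P := Real.rpow_pos_of_pos (by positivity) _
  rw [card_CT]
  push_cast
  have hterm : ∀ t : Fin (L+1),
      ((m:ℝ)+1) * (((2:ℝ)^(L+1-(t:ℕ)))^m * ((2:ℝ)^((m+1)*(m+2)) * (kf (2^(t:ℕ)) : ℝ)))
        ≤ D * P * ρ^(L-(t:ℕ)) := by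
    intro t
    have hkft := hkf (2^(t:ℕ))
    have hcast : (((2:ℕ)^(t:ℕ) : ℕ) : ℝ) = (2:ℝ)^(t:ℕ) := by push_cast; ring
    rw [hcast] at hkft
    have hkey := key_identity m L (t:ℕ) β (by omega)
    have hnn1 : (0:ℝ) ≤ ((2:ℝ)^(L+1-(t:ℕ)))^m := by positivity
    calc ((m:ℝ)+1) * (((2:ℝ)^(L+1-(t:ℕ)))^m * ((2:ℝ)^((m+1)*(m+2)) * (kf (2^(t:ℕ)) : ℝ)))
        ≤ ((m:ℝ)+1) * (((2:ℝ)^(L+1-(t:ℕ)))^m * ((2:ℝ)^((m+1)*(m+2)) * (C * ((2:ℝ)^(t:ℕ))^β))) := by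
          apply mul_le_mul_of_nonneg_left _ (by positivity)
          apply mul_le_mul_of_nonneg_left _ hnn1
          apply mul_le_mul_of_nonneg_left hkft (by positivity)
      _ = D * P * ρ^(L-(t:ℕ)) := by
          rw [hD, hP, hρ]
          have : ((m:ℝ)+1) * (((2:ℝ)^(L+1-(t:ℕ)))^m * ((2:ℝ)^((m+1)*(m+2)) * (C * ((2:ℝ)^(t:ℕ))^β)))
              = ((m:ℝ)+1) * (2:ℝ)^((m+1)*(m+2)) * C * (((2:ℝ)^(L+1-(t:ℕ)))^m * ((2:ℝ)^(t:ℕ))^β) := by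
            ring
          rw [this, hkey]
          ring
  calc (∑ t : Fin (L+1), ((m:ℝ)+1) * (((2:ℝ)^(L+1-(t:ℕ)))^m * ((2:ℝ)^((m+1)*(m+2)) * (kf (2^(t:ℕ)) : ℝ))))
      ≤ ∑ t : Fin (L+1), D * P * ρ^(L-(t:ℕ)) := Finset.sum_le_sum (fun t _ => hterm t)
    _ = D * P * ∑ t : Fin (L+1), ρ^(L-(t:ℕ)) := by rw [Finset.mul_sum]
    _ ≤ D * P * (1 - ρ)⁻¹ := by
        apply mul_le_mul_of_nonneg_left _ (by positivity)
        have hsum : ∑ t : Fin (L+1), ρ^(L-(t:ℕ)) = ∑ i ∈ Finset.range (L+1), ρ^i := by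
          rw [Fin.sum_univ_eq_sum_range (fun i => ρ^(L-i)) (L+1)]
          have hre := Finset.sum_range_reflect (fun i => ρ^i) (L+1)
          simp only [Nat.add_sub_cancel] at hre
          exact hre
        rw [hsum, geom_sum_eq hρlt.ne (L+1)]
        have heq : (ρ^(L+1) - 1)/(ρ - 1) = (1 - ρ^(L+1))/(1 - ρ) := by
          rw [← neg_div_neg_eq]; ring_nf
        rw [heq, ← one_div]
        have hnum : 1 - ρ^(L+1) ≤ 1 := by
          have : (0:ℝ) ≤ ρ^(L+1) := by positivity
          linarith
        exact div_le_div_of_nonneg_right hnum h1ρ.le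
    _ = ((m+1) * 2^((m+1)*(m+2)) * 2^m * C / (1 - (2:ℝ)^((m:ℝ) - β))) * ((2:ℝ)^L)^β := by
        rw [hD, hP, hρ]; ring


end S0

/-- If the complete `r`-partite `r`-uniform hypergraph `K_{n,…,n}` can be
colored with `O(n^β)` colors (β > r-2) with no color class containing a member of the
family `F` of connected `r`-uniform hypergraphs, then the same holds for `K_n^{(r)}`. -/

theorem statement_0 (r : ℕ) (hr : 2 ≤ r) (β : ℝ) (hβ : (r : ℝ) - 2 < β)
    (F : Set (Set (Finset ℕ)))
    (hconn : ∀ E ∈ F, HConnected E)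
    (hunif : ∀ E ∈ F, ∀ e ∈ E, e.card = r)
    (hyp : ∃ C : ℝ, 0 < C ∧ ∀ n : ℕ, ∃ k : ℕ, (k : ℝ) ≤ C * (n : ℝ) ^ β ∧
      ∃ col : {e : Finset (Fin r × Fin n) // e ∈ partiteEdges r n} → Fin k,
        ∀ j : Fin k, ∀ E ∈ F,
          ¬ HContains E {e | ∃ he : e ∈ partiteEdges r n, col ⟨e, he⟩ = j}) :
    ∃ C : ℝ, 0 < C ∧ ∀ n : ℕ, ∃ k : ℕ, (k : ℝ) ≤ C * (n : ℝ) ^ β ∧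
      ∃ col : {e : Finset (Fin n) // e.card = r} → Fin k,
        ∀ j : Fin k, ∀ E ∈ F,
          ¬ HContains E {e | ∃ he : e.card = r, col ⟨e, he⟩ = j} := by
  obtain ⟨m, rfl⟩ : ∃ m, r = m + 2 := ⟨r - 2, by omega⟩
  obtain ⟨C, hC, hcol⟩ := hyp
  have hyp' : ∀ N : ℕ, ∃ (k : ℕ)
      (col : {e : Finset (Fin (m+2) × Fin N) // e ∈ partiteEdges (m+2) N} → Fin k),
      (k : ℝ) ≤ C * (N : ℝ)^β ∧ ∀ j, ∀ E ∈ F,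
        ¬ HContains E {e | ∃ he : e ∈ partiteEdges (m+2) N, col ⟨e, he⟩ = j} := by
    intro N
    obtain ⟨k, hk, col, hcol'⟩ := hcol N
    exact ⟨k, col, hk, hcol'⟩
  choose kf colfun hkb havoid using hyp'
  have hβm : (m : ℝ) < β := by
    push_cast at hβ
    linarith
  have hβ0 : 0 < β := lt_of_le_of_lt (Nat.cast_nonneg m) hβm
  set ρ : ℝ := (2:ℝ)^((m:ℝ) - β) with hρ
  have hρpos : 0 < ρ := Real.rpow_pos_of_pos (by norm_num) _
  have hρlt : ρ < 1 := Real.rpow_lt_one_of_one_lt_of_neg (by norm_num) (by linarith)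
  have h1ρ : 0 < 1 - ρ := by linarith
  set D : ℝ := ((m:ℝ)+1) * 2^((m+1)*(m+2)) * 2^m * C with hD
  have hDpos : 0 < D := by
    apply mul_pos (mul_pos (mul_pos _ _) _) hC <;> positivity
  have h2β : (0:ℝ) < (2:ℝ)^β := Real.rpow_pos_of_pos (by norm_num) _
  refine ⟨D / (1 - ρ) * (2:ℝ)^β + 1, by positivity, ?_⟩
  intro n
  by_cases hn0 : n = 0
  · subst hn0
    refine ⟨0, ?_, ?_⟩
    · simp only [Nat.cast_zero]
      rw [Real.zero_rpow (ne_of_gt hβ0)]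
      simp
    · refine ⟨fun e => False.elim ?_, fun j => j.elim0⟩
      have h1 : e.1.card ≤ 0 := by
        have := Finset.card_le_univ e.1
        simpa using this
      have h2 := e.2
      omega
  · have hn1 : 1 ≤ n := by omega
    set L := Nat.size n with hL
    have hnle : n ≤ 2^L := (Nat.lt_size_self n).le
    refine ⟨Fintype.card (S0.CT m L kf), ?_, ?_⟩
    · have hb := S0.card_CT_le m L kf C β hC hβm (fun M => hkb M)
      have hLpos : 0 < L := Nat.size_pos.mpr (by omega)
      have hszn : (2:ℕ)^L ≤ 2 * n := by
        have h1 : (2:ℕ)^(L-1) ≤ n := Nat.lt_size.mp (by omega)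
        have h2 : (2:ℕ)^L = 2 * 2^(L-1) := by
          rw [← pow_succ']
          congr 1
          omega
        omega
      have hsz : ((2:ℝ)^L) ≤ 2 * (n:ℝ) := by
        have := (Nat.cast_le (α := ℝ)).mpr hszn
        push_cast at this
        linarith
      have hrp : ((2:ℝ)^L)^β ≤ (2 * (n:ℝ))^β :=
        Real.rpow_le_rpow (by positivity) hsz hβ0.le
      rw [Real.mul_rpow (by norm_num) (Nat.cast_nonneg n)] at hrp
      have hnβ : (0:ℝ) ≤ (n:ℝ)^β := Real.rpow_nonneg (Nat.cast_nonneg n) _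
      calc (Fintype.card (S0.CT m L kf) : ℝ)
          ≤ D / (1 - ρ) * ((2:ℝ)^L)^β := hb
        _ ≤ D / (1 - ρ) * ((2:ℝ)^β * (n:ℝ)^β) := by
            apply mul_le_mul_of_nonneg_left hrp (by positivity)
        _ = (D / (1 - ρ) * (2:ℝ)^β) * (n:ℝ)^β := by ring
        _ ≤ (D / (1 - ρ) * (2:ℝ)^β + 1) * (n:ℝ)^β := by nlinarith
    · refine ⟨fun e => (Fintype.equivFin (S0.CT m L kf))
        (S0.mycolor m L kf hnle colfun e), ?_⟩
      intro j E hE hcont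
      obtain ⟨φ, hinj, hmaps⟩ := hcont
      set c := (Fintype.equivFin (S0.CT m L kf)).symm j with hc
      have hedge : ∀ a ∈ E, ∃ hca : (a.image φ).card = m+2,
          S0.mycolor m L kf hnle colfun ⟨a.image φ, hca⟩ = c := by
        intro a ha
        have hm := hmaps a ha
        rw [Set.mem_setOf_eq] at hm
        obtain ⟨hca, hcj⟩ := hm
        exact ⟨hca, by rw [hc, Equiv.eq_symm_apply]; exact hcj⟩
      have hcontra := S0.avoidance m L kf hnle colfun E (hconn E hE) c φ hinj hedge
      exact havoid (2^(S0.Pt m L kf c)) ⟨S0.Pj m L kf c, S0.Pj_lt m L kf c⟩ E hE hcontra
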